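/- arXiv:0909.4887 — 2 statements merged into one kernel-verified Lean document; each statement's English description precedes it below -/
import Mathlib

section
/- For every r₁₅ ∈ (0, √6/4) there exist r₁₆ and r₄₅ with 1 > r₁₆ > r₄₅ > r₁₅ and a symmetric configuration q₁,…,q₇ in ℝ³ realizing these distance parameters which lies in Ω_H, i.e. satisfying Δ₁₄₅₇ ≤ 0 and H = (R₁₅ − R₄₅)D₁₄₅₆ − (R₄₅ − R₁₆)D₁₄₆₇ = 0. -/
noncomputable section

open Finset

/-- Euclidean 3-space. -/
abbrev E3 : Type := EuclideanSpace ℝ (Fin 3)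

/-- Determinant of three vectors in `ℝ³`. -/
def det3 (u v w : E3) : ℝ :=
  Matrix.det !![u 0, u 1, u 2; v 0, v 1, v 2; w 0, w 1, w 2]

/-- The oriented volume `Δ_{ijhk} = det(qᵢ − qⱼ, qⱼ − q_h, q_h − q_k)`
(0-based indices: body `i+1` of the paper is index `i`). -/
def Delta {n : ℕ} (q : Fin n → E3) (i j h k : Fin n) : ℝ :=
  det3 (q i - q j) (q j - q h) (q h - q k)

/-- The unsigned volume `D_{ijhk} = |Δ_{ijhk}|`. -/
def Dvol {n : ℕ} (q : Fin n → E3) (i j h k : Fin n) : ℝ := |Delta q i j h k|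

/-- `R_{ij} = ‖qᵢ − qⱼ‖⁻³`. -/
def Rinv {n d : ℕ} (q : Fin n → EuclideanSpace ℝ (Fin d)) (i j : Fin n) : ℝ :=
  (‖q i - q j‖ ^ 3)⁻¹

/-- The `n` bodies with masses `m` at positions `q` in `ℝ^d` form a central configuration:
there is `λ ∈ ℝ` with `∑_{k ≠ i} m_k R_{ik} (qᵢ − q_k) = λ (qᵢ − q_G)` for every `i`,
where `q_G` is the center of mass. -/
def IsCentralConfig {n d : ℕ} (m : Fin n → ℝ) (q : Fin n → EuclideanSpace ℝ (Fin d)) : Prop :=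
  ∃ lam : ℝ, ∀ i : Fin n,
    ∑ k ∈ Finset.univ.erase i, (m k * Rinv q i k) • (q i - q k)
      = lam • (q i - (∑ j, m j)⁻¹ • ∑ j, m j • q j)

/-- Seven points in `ℝ³` (0-based indices) form a symmetric configuration:
`r₁₂=r₁₃=r₂₃=r₁₄=r₂₄=r₃₄=1`, `r₁₅=r₂₆=r₃₇`, `r₄₅=r₄₆=r₄₇`, `r₅₆=r₆₇=r₅₇`,
`r₁₆=r₁₇=r₂₅=r₂₇=r₃₅=r₃₆`, and there is a rotation (isometry) of order 3 mapping
`q₁→q₂→q₃→q₁`, `q₅→q₆→q₇→q₅` and fixing `q₄`. -/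
def IsSymmetricConfig (q : Fin 7 → E3) : Prop :=
  dist (q 0) (q 1) = 1 ∧ dist (q 0) (q 2) = 1 ∧ dist (q 1) (q 2) = 1 ∧
  dist (q 0) (q 3) = 1 ∧ dist (q 1) (q 3) = 1 ∧ dist (q 2) (q 3) = 1 ∧
  dist (q 0) (q 4) = dist (q 1) (q 5) ∧ dist (q 1) (q 5) = dist (q 2) (q 6) ∧
  dist (q 3) (q 4) = dist (q 3) (q 5) ∧ dist (q 3) (q 5) = dist (q 3) (q 6) ∧
  dist (q 4) (q 5) = dist (q 5) (q 6) ∧ dist (q 5) (q 6) = dist (q 4) (q 6) ∧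
  dist (q 0) (q 5) = dist (q 0) (q 6) ∧ dist (q 0) (q 6) = dist (q 1) (q 4) ∧
  dist (q 1) (q 4) = dist (q 1) (q 6) ∧ dist (q 1) (q 6) = dist (q 2) (q 4) ∧
  dist (q 2) (q 4) = dist (q 2) (q 5) ∧
  ∃ ρ : E3 ≃ᵢ E3, ρ.trans (ρ.trans ρ) = IsometryEquiv.refl E3 ∧
    ρ (q 0) = q 1 ∧ ρ (q 1) = q 2 ∧ ρ (q 2) = q 0 ∧
    ρ (q 4) = q 5 ∧ ρ (q 5) = q 6 ∧ ρ (q 6) = q 4 ∧ ρ (q 3) = q 3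

/-- `H = (R₁₅ − R₄₅) D₁₄₅₆ − (R₄₅ − R₁₆) D₁₄₆₇`. -/
def Hval (q : Fin 7 → E3) : ℝ :=
  (Rinv q 0 4 - Rinv q 3 4) * Dvol q 0 3 4 5 - (Rinv q 3 4 - Rinv q 0 5) * Dvol q 0 3 5 6

/-- A symmetric configuration is in `Ω` if `r₁₅ ∈ (0, √6/4)`, `Δ₁₄₅₇ ≤ 0` and
`1 > r₁₆ > r₄₅ > r₁₅`. -/
def InOmega (q : Fin 7 → E3) : Prop :=
  IsSymmetricConfig q ∧
  0 < dist (q 0) (q 4) ∧ dist (q 0) (q 4) < Real.sqrt 6 / 4 ∧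
  Delta q 0 3 4 6 ≤ 0 ∧
  dist (q 0) (q 5) < 1 ∧ dist (q 3) (q 4) < dist (q 0) (q 5) ∧
  dist (q 0) (q 4) < dist (q 3) (q 4)

/-- `Ω_H` is the subset of `Ω` where `H = 0`. -/
def InOmegaH (q : Fin 7 → E3) : Prop := InOmega q ∧ Hval q = 0

/-- `f_{ijh} = ∑_{k ∉ {i,j,h}} m_k (R_{ik} − R_{jk}) Δ_{ijhk}`. -/
def fval (m : Fin 7 → ℝ) (q : Fin 7 → E3) (i j h : Fin 7) : ℝ :=
  ∑ k ∈ Finset.univ \ {i, j, h}, m k * (Rinv q i k - Rinv q j k) * Delta q i j h k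

/-- `g(s₁₅, s₁₆, s₄₅)`. -/
def gfun (s15 s16 s45 : ℝ) : ℝ :=
  -3 + 2*s15 - 3*s15^2 + 4*s16 + 4*s15*s16 - 4*s16^2 + 2*s45 + 2*s15*s45 + 4*s16*s45 - 3*s45^2

/-- Area of the triangle with vertices `a`, `b`, `c` in `ℝ³`, via the cross product. -/
def triArea (a b c : E3) : ℝ :=
  ‖(WithLp.equiv 2 (Fin 3 → ℝ)).symm
    (crossProduct ((WithLp.equiv 2 (Fin 3 → ℝ)) (b - a)) ((WithLp.equiv 2 (Fin 3 → ℝ)) (c - a)))‖ / 2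

def e3 (x y z : ℝ) : E3 := WithLp.toLp 2 ![x, y, z]
@[simp] lemma e3_0 (x y z : ℝ) : e3 x y z 0 = x := rfl
@[simp] lemma e3_1 (x y z : ℝ) : e3 x y z 1 = y := rfl
@[simp] lemma e3_2 (x y z : ℝ) : e3 x y z 2 = z := rfl
lemma e3_ext {x y z x' y' z' : ℝ} (h1 : x = x') (h2 : y = y') (h3 : z = z') :
    e3 x y z = e3 x' y' z' := by rw [h1, h2, h3]
lemma e3_sub (x y z x' y' z' : ℝ) : e3 x y z - e3 x' y' z' = e3 (x-x') (y-y') (z-z') := by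
  apply PiLp.ext; intro i; fin_cases i <;> rfl
lemma norm_e3 (x y z : ℝ) : ‖e3 x y z‖ = Real.sqrt (x^2+y^2+z^2) := by
  rw [EuclideanSpace.norm_eq, Fin.sum_univ_three]; simp [sq_abs]
lemma dist_e3 (x y z x' y' z' : ℝ) :
    dist (e3 x y z) (e3 x' y' z') = Real.sqrt ((x-x')^2+(y-y')^2+(z-z')^2) := by
  rw [dist_eq_norm, e3_sub, norm_e3]
lemma det3_e3 (x1 y1 z1 x2 y2 z2 x3 y3 z3 : ℝ) :
    det3 (e3 x1 y1 z1) (e3 x2 y2 z2) (e3 x3 y3 z3)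
      = x1*(y2*z3 - z2*y3) - y1*(x2*z3 - z2*x3) + z1*(x2*y3 - y2*x3) := by
  simp [det3, Matrix.det_fin_three]; ring
lemma h3 : Real.sqrt 3 ^ 2 = 3 := Real.sq_sqrt (by norm_num)
lemma h6 : Real.sqrt 6 ^ 2 = 6 := Real.sq_sqrt (by norm_num)
lemma e3_eta (p : E3) : p = e3 (p 0) (p 1) (p 2) := by
  apply PiLp.ext; intro i; fin_cases i <;> rfl
def rotF (p : E3) : E3 :=
  e3 (-(p 0)/2 - Real.sqrt 3 * p 1/2) (Real.sqrt 3 * p 0/2 - p 1/2) (p 2)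
def rotG (p : E3) : E3 :=
  e3 (-(p 0)/2 + Real.sqrt 3 * p 1/2) (-(Real.sqrt 3 * p 0)/2 - p 1/2) (p 2)
def rho : E3 ≃ᵢ E3 where
  toFun := rotF
  invFun := rotG
  left_inv := by
    intro p
    show rotG (rotF p) = p
    have : rotG (rotF p) = e3 (p 0) (p 1) (p 2) := by
      simp only [rotF, rotG, e3_0, e3_1, e3_2]
      refine e3_ext ?_ ?_ rfl
      · linear_combination (p 0/4) * h3
      · linear_combination (p 1/4) * h3
    exact this.trans (e3_eta p).symm
  right_inv := by
    intro p
    show rotF (rotG p) = p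
    have : rotF (rotG p) = e3 (p 0) (p 1) (p 2) := by
      simp only [rotF, rotG, e3_0, e3_1, e3_2]
      refine e3_ext ?_ ?_ rfl
      · linear_combination (p 0/4) * h3
      · linear_combination (p 1/4) * h3
    exact this.trans (e3_eta p).symm
  isometry_toFun := by
    apply Isometry.of_dist_eq
    intro p q
    show dist (rotF p) (rotF q) = dist p q
    rw [show dist p q = dist (e3 (p 0) (p 1) (p 2)) (e3 (q 0) (q 1) (q 2)) by
          rw [← e3_eta p, ← e3_eta q]]
    simp only [rotF]
    rw [dist_e3, dist_e3]
    congr 1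
    linear_combination (((p 0 - q 0)^2 + (p 1 - q 1)^2)/4) * h3
lemma rho_cube : rho.trans (rho.trans rho) = IsometryEquiv.refl E3 := by
  refine IsometryEquiv.ext fun p => ?_
  show rotF (rotF (rotF p)) = p
  have : rotF (rotF (rotF p)) = e3 (p 0) (p 1) (p 2) := by
    simp only [rotF, e3_0, e3_1, e3_2]
    refine e3_ext ?_ ?_ rfl
    · linear_combination ((3 * p 0 + Real.sqrt 3 * p 1)/8) * h3
    · linear_combination ((-(Real.sqrt 3) * p 0 + 3 * p 1)/8) * h3
  exact this.trans (e3_eta p).symm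

def cfg (u v : ℝ) : Fin 7 → E3 :=
  ![e3 (Real.sqrt 3/3) 0 0, e3 (-(Real.sqrt 3/6)) (1/2) 0, e3 (-(Real.sqrt 3/6)) (-(1/2)) 0,
    e3 0 0 (Real.sqrt 6/3), e3 u 0 v, e3 (-(u/2)) (Real.sqrt 3*u/2) v,
    e3 (-(u/2)) (-(Real.sqrt 3*u/2)) v]
@[simp] lemma cfg_0 (u v : ℝ) : cfg u v 0 = e3 (Real.sqrt 3/3) 0 0 := rfl
@[simp] lemma cfg_1 (u v : ℝ) : cfg u v 1 = e3 (-(Real.sqrt 3/6)) (1/2) 0 := rfl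
@[simp] lemma cfg_2 (u v : ℝ) : cfg u v 2 = e3 (-(Real.sqrt 3/6)) (-(1/2)) 0 := rfl
@[simp] lemma cfg_3 (u v : ℝ) : cfg u v 3 = e3 0 0 (Real.sqrt 6/3) := rfl
@[simp] lemma cfg_4 (u v : ℝ) : cfg u v 4 = e3 u 0 v := rfl
@[simp] lemma cfg_5 (u v : ℝ) : cfg u v 5 = e3 (-(u/2)) (Real.sqrt 3*u/2) v := rfl
@[simp] lemma cfg_6 (u v : ℝ) : cfg u v 6 = e3 (-(u/2)) (-(Real.sqrt 3*u/2)) v := rfl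

lemma symm_cfg (u v : ℝ) : IsSymmetricConfig (cfg u v) := by
  refine ⟨?_, ?_, ?_, ?_, ?_, ?_, ?_, ?_, ?_, ?_, ?_, ?_, ?_, ?_, ?_, ?_, ?_, ?_⟩
  · rw [cfg_0, cfg_1, dist_e3, show ((Real.sqrt 3/3 - -(Real.sqrt 3/6))^2 + (0 - 1/2)^2 + ((0:ℝ) - 0)^2) = 1 by
      linear_combination (1/4) * h3]
    exact Real.sqrt_one
  · rw [cfg_0, cfg_2, dist_e3, show ((Real.sqrt 3/3 - -(Real.sqrt 3/6))^2 + (0 - -(1/2))^2 + ((0:ℝ) - 0)^2) = 1 by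
      linear_combination (1/4) * h3]
    exact Real.sqrt_one
  · rw [cfg_1, cfg_2, dist_e3, show ((-(Real.sqrt 3/6) - -(Real.sqrt 3/6))^2 + (1/2 - -(1/2))^2 + ((0:ℝ) - 0)^2) = 1 by
      ring]
    exact Real.sqrt_one
  · rw [cfg_0, cfg_3, dist_e3, show ((Real.sqrt 3/3 - 0)^2 + ((0:ℝ) - 0)^2 + (0 - Real.sqrt 6/3)^2) = 1 by
      linear_combination (1/9) * h3 + (1/9) * h6]
    exact Real.sqrt_one
  · rw [cfg_1, cfg_3, dist_e3, show ((-(Real.sqrt 3/6) - 0)^2 + (1/2 - (0:ℝ))^2 + (0 - Real.sqrt 6/3)^2) = 1 by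
      linear_combination (1/36) * h3 + (1/9) * h6]
    exact Real.sqrt_one
  · rw [cfg_2, cfg_3, dist_e3, show ((-(Real.sqrt 3/6) - 0)^2 + (-(1/2) - (0:ℝ))^2 + (0 - Real.sqrt 6/3)^2) = 1 by
      linear_combination (1/36) * h3 + (1/9) * h6]
    exact Real.sqrt_one
  · rw [cfg_0, cfg_4, cfg_1, cfg_5, dist_e3, dist_e3]; congr 1
    linear_combination (1/12 - u*u/4) * h3
  · rw [cfg_1, cfg_5, cfg_2, cfg_6, dist_e3, dist_e3]; congr 1; ring
  · rw [cfg_3, cfg_4, cfg_5, dist_e3, dist_e3]; congr 1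
    linear_combination (-(u*u)/4) * h3
  · rw [cfg_3, cfg_5, cfg_6, dist_e3, dist_e3]; congr 1; ring
  · rw [cfg_4, cfg_5, cfg_6, dist_e3, dist_e3]; congr 1
    linear_combination (-(3*u*u)/4) * h3
  · rw [cfg_4, cfg_5, cfg_6, dist_e3, dist_e3]; congr 1
    linear_combination ((3*u*u)/4) * h3
  · rw [cfg_0, cfg_5, cfg_6, dist_e3, dist_e3]; congr 1; ring
  · rw [cfg_0, cfg_6, cfg_1, cfg_4, dist_e3, dist_e3]; congr 1
    linear_combination (1/12 + u*u/4) * h3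
  · rw [cfg_1, cfg_4, cfg_6, dist_e3, dist_e3]; congr 1
    linear_combination (-(u*u)/4) * h3
  · rw [cfg_1, cfg_6, cfg_2, cfg_4, dist_e3, dist_e3]; congr 1
    linear_combination ((u*u)/4) * h3
  · rw [cfg_2, cfg_4, cfg_5, dist_e3, dist_e3]; congr 1
    linear_combination (-(u*u)/4) * h3
  · refine ⟨rho, rho_cube, ?_, ?_, ?_, ?_, ?_, ?_, ?_⟩
    · show rotF (cfg u v 0) = cfg u v 1
      rw [cfg_0, cfg_1]
      simp only [rotF, e3_0, e3_1, e3_2]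
      refine e3_ext (by ring) ?_ rfl
      linear_combination (1/6) * h3
    · show rotF (cfg u v 1) = cfg u v 2
      rw [cfg_1, cfg_2]
      simp only [rotF, e3_0, e3_1, e3_2]
      refine e3_ext (by ring) ?_ rfl
      linear_combination (-1/12) * h3
    · show rotF (cfg u v 2) = cfg u v 0
      rw [cfg_2, cfg_0]
      simp only [rotF, e3_0, e3_1, e3_2]
      refine e3_ext (by ring) ?_ rfl
      linear_combination (-1/12) * h3
    · show rotF (cfg u v 4) = cfg u v 5
      rw [cfg_4, cfg_5]
      simp only [rotF, e3_0, e3_1, e3_2]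
      exact e3_ext (by ring) (by ring) rfl
    · show rotF (cfg u v 5) = cfg u v 6
      rw [cfg_5, cfg_6]
      simp only [rotF, e3_0, e3_1, e3_2]
      refine e3_ext ?_ (by ring) rfl
      linear_combination (-(u)/4) * h3
    · show rotF (cfg u v 6) = cfg u v 4
      rw [cfg_6, cfg_4]
      simp only [rotF, e3_0, e3_1, e3_2]
      refine e3_ext ?_ (by ring) rfl
      linear_combination ((u)/4) * h3
    · show rotF (cfg u v 3) = cfg u v 3
      rw [cfg_3]
      simp only [rotF, e3_0, e3_1, e3_2]
      exact e3_ext (by ring) (by ring) rfl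

def n15 (u v : ℝ) : ℝ := (Real.sqrt 3/3 - u)^2 + v^2
def n45 (u v : ℝ) : ℝ := u^2 + (v - Real.sqrt 6/3)^2
def n16 (u v : ℝ) : ℝ := (Real.sqrt 3/3 + u/2)^2 + (Real.sqrt 3*u/2)^2 + v^2
def Aq (u v : ℝ) : ℝ := Real.sqrt 3/3*(Real.sqrt 6/3 - v) - Real.sqrt 6/3*u
def Bq (u v : ℝ) : ℝ := Real.sqrt 3/3*(Real.sqrt 6/3 - v) + Real.sqrt 6/3*u/2

lemma norm04 (u v : ℝ) : ‖cfg u v 0 - cfg u v 4‖ = Real.sqrt (n15 u v) := by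
  rw [cfg_0, cfg_4, e3_sub, norm_e3]; congr 1; simp only [n15]; ring
lemma norm34 (u v : ℝ) : ‖cfg u v 3 - cfg u v 4‖ = Real.sqrt (n45 u v) := by
  rw [cfg_3, cfg_4, e3_sub, norm_e3]; congr 1; simp only [n45]; ring
lemma norm05 (u v : ℝ) : ‖cfg u v 0 - cfg u v 5‖ = Real.sqrt (n16 u v) := by
  rw [cfg_0, cfg_5, e3_sub, norm_e3]; congr 1; simp only [n16]; ring

lemma delta0345 (u v : ℝ) : Delta (cfg u v) 0 3 4 5 = Real.sqrt 3*u/2 * Aq u v := by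
  unfold Delta
  rw [cfg_0, cfg_3, cfg_4, cfg_5, e3_sub, e3_sub, e3_sub, det3_e3]
  simp only [Aq]; ring
lemma delta0356 (u v : ℝ) : Delta (cfg u v) 0 3 5 6 = -(Real.sqrt 3*u) * Bq u v := by
  unfold Delta
  rw [cfg_0, cfg_3, cfg_5, cfg_6, e3_sub, e3_sub, e3_sub, det3_e3]
  simp only [Bq]; ring
lemma delta0346 (u v : ℝ) : Delta (cfg u v) 0 3 4 6 = -(Real.sqrt 3*u/2 * Aq u v) := by
  unfold Delta
  rw [cfg_0, cfg_3, cfg_4, cfg_6, e3_sub, e3_sub, e3_sub, det3_e3]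
  simp only [Aq]; ring

lemma Hval_cfg (u v : ℝ) : Hval (cfg u v) =
    ((Real.sqrt (n15 u v) ^ 3)⁻¹ - (Real.sqrt (n45 u v) ^ 3)⁻¹) * |Real.sqrt 3*u/2 * Aq u v|
  - ((Real.sqrt (n45 u v) ^ 3)⁻¹ - (Real.sqrt (n16 u v) ^ 3)⁻¹) * |-(Real.sqrt 3*u) * Bq u v| := by
  unfold Hval Rinv Dvol
  rw [norm04, norm34, norm05, delta0345, delta0356]

lemma key1 (u v : ℝ) : n16 u v - n45 u v = Real.sqrt 3/3*u + 2*Real.sqrt 6/3*v - 1/3 := by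
  simp only [n16, n45]; linear_combination (1/9 + u*u/4) * h3 + (-1/9) * h6
lemma key2 (u v : ℝ) : n45 u v - n15 u v = 2*Real.sqrt 3/3*u - 2*Real.sqrt 6/3*v + 1/3 := by
  simp only [n45, n15]; linear_combination (-1/9) * h3 + (1/9) * h6
lemma key3 (u v : ℝ) : n16 u v = 1/3 + Real.sqrt 3/3*u + u^2 + v^2 := by
  simp only [n16]; linear_combination (1/9 + u*u/4) * h3

lemma h2 : Real.sqrt 2 ^ 2 = 2 := Real.sq_sqrt (by norm_num)
lemma s2pos : 0 < Real.sqrt 2 := Real.sqrt_pos.2 (by norm_num)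
lemma s3pos : 0 < Real.sqrt 3 := Real.sqrt_pos.2 (by norm_num)
lemma s6pos : 0 < Real.sqrt 6 := Real.sqrt_pos.2 (by norm_num)
lemma h23 : Real.sqrt 2 * Real.sqrt 3 = Real.sqrt 6 := by
  rw [← Real.sqrt_mul (by norm_num : (0:ℝ) ≤ 2) 3]; norm_num
lemma h26 : Real.sqrt 2 * Real.sqrt 6 = 2 * Real.sqrt 3 := by
  rw [← Real.sqrt_mul (by norm_num : (0:ℝ) ≤ 2) 6,
      show (2:ℝ)*6 = 2^2*3 by norm_num, Real.sqrt_mul (by positivity) 3,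
      Real.sqrt_sq (by norm_num : (0:ℝ) ≤ 2)]

lemma csq_gt {c : ℝ} (h : Real.sqrt 3/3 < c) : 1/3 < c^2 := by
  nlinarith [h3, s3pos]
lemma csq_lt {c : ℝ} (h0 : 0 < c) (h : c < 2*Real.sqrt 2/3) : c^2 < 8/9 := by
  nlinarith [h2, s2pos]
lemma r_lt_34 {r : ℝ} (hr1 : r < Real.sqrt 6/4) : r < 3/4 := by
  nlinarith [h6, s6pos]
lemma n16_lt_one {r U V : ℝ} (hr0 : 0 < r) (hr34 : r < 3/4) (hU0 : 0 ≤ U)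
    (hUle : U ≤ Real.sqrt 3/3 - r*(Real.sqrt 3/3)) (hV0 : 0 ≤ V) (hVle : V ≤ r) :
    1/3 + Real.sqrt 3/3*U + U^2 + V^2 < 1 := by
  nlinarith [h3, s3pos, sq_nonneg U, sq_nonneg V, mul_pos hr0 hr0]

lemma sq_diff_pos {x y : ℝ} (hx : 0 < x) (hy : 0 ≤ y) (h : y^2 < x^2) : y < x := by
  nlinarith

def uu (r t : ℝ) : ℝ := Real.sqrt 3/3 - r*t
def vv (r t : ℝ) : ℝ := r * Real.sqrt (1 - t^2)

section analytic
variable {r t : ℝ}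

lemma tpos (h1 : Real.sqrt 3/3 ≤ t) : 0 < t := lt_of_lt_of_le (by positivity) h1

lemma uu_pos (hr0 : 0 < r) (hr1 : r < Real.sqrt 6/4) (h1 : Real.sqrt 3/3 ≤ t) (h2t : t ≤ 2*Real.sqrt 2/3) : 0 < uu r t := by
  have ht0 : 0 < t := tpos h1
  have e1 : r*t ≤ r*(2*Real.sqrt 2/3) := by
    apply mul_le_mul_of_nonneg_left h2t hr0.le
  have e2 : r*(2*Real.sqrt 2/3) < (Real.sqrt 6/4)*(2*Real.sqrt 2/3) := by
    apply mul_lt_mul_of_pos_right hr1 (by positivity)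
  have e3' : (Real.sqrt 6/4)*(2*Real.sqrt 2/3) = Real.sqrt 3/3 := by
    linear_combination (1/6) * h26
  simp only [uu]; linarith
lemma tsq_le (h1 : Real.sqrt 3/3 ≤ t) (h2t : t ≤ 2*Real.sqrt 2/3) : t^2 ≤ 8/9 := by
  have ht0 : 0 < t := tpos h1
  nlinarith [h2, s2pos]
lemma vv_sq (h1 : Real.sqrt 3/3 ≤ t) (h2t : t ≤ 2*Real.sqrt 2/3) :
    vv r t ^ 2 = r^2 * (1 - t^2) := by
  have := tsq_le h1 h2t
  simp only [vv]; rw [mul_pow, Real.sq_sqrt (by linarith)]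
lemma vv_nonneg (hr0 : 0 < r) : 0 ≤ vv r t := by
  simp only [vv]; positivity
lemma vv_le (hr0 : 0 < r) (h1 : Real.sqrt 3/3 ≤ t) (h2t : t ≤ 2*Real.sqrt 2/3) : vv r t ≤ r := by
  have hs : Real.sqrt (1 - t^2) ≤ 1 := Real.sqrt_le_one.mpr (by nlinarith [tsq_le h1 h2t])
  simp only [vv]
  nlinarith [hs, Real.sqrt_nonneg (1 - t^2)]
lemma n15_eq (h1 : Real.sqrt 3/3 ≤ t) (h2t : t ≤ 2*Real.sqrt 2/3) :
    n15 (uu r t) (vv r t) = r^2 := by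
  simp only [n15, uu]
  linear_combination vv_sq (r := r) h1 h2t
lemma n45_pos (hr0 : 0 < r) (hr1 : r < Real.sqrt 6/4) (h1 : Real.sqrt 3/3 ≤ t) (h2t : t ≤ 2*Real.sqrt 2/3) :
    0 < n45 (uu r t) (vv r t) := by
  have := uu_pos hr0 hr1 h1 h2t
  simp only [n45]
  nlinarith [sq_nonneg (vv r t - Real.sqrt 6/3)]
lemma n16_pos (hr0 : 0 < r) (hr1 : r < Real.sqrt 6/4) (h1 : Real.sqrt 3/3 ≤ t) (h2t : t ≤ 2*Real.sqrt 2/3) :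
    0 < n16 (uu r t) (vv r t) := by
  have hu := uu_pos hr0 hr1 h1 h2t
  simp only [n16]
  nlinarith [sq_nonneg (vv r t), s3pos, sq_nonneg (Real.sqrt 3 * uu r t/2)]

end analytic

section endpoints
variable {r : ℝ}

lemma t1_le_t2 : (Real.sqrt 3/3 : ℝ) ≤ 2*Real.sqrt 2/3 := by
  nlinarith [h2, h3, s2pos, s3pos]

lemma r_lt_one (hr1 : r < Real.sqrt 6/4) : r < 1 := by
  nlinarith [h6, s6pos]

lemma vv_t1 (hr0 : 0 < r) : vv r (Real.sqrt 3/3) = r * (Real.sqrt 6/3) := by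
  simp only [vv]
  rw [show 1 - (Real.sqrt 3/3)^2 = (Real.sqrt 6/3)^2 by
        linear_combination (-1/9)*h3 + (-1/9)*h6,
      Real.sqrt_sq (by positivity)]

lemma vv_t2 (hr0 : 0 < r) : vv r (2*Real.sqrt 2/3) = r * (1/3) := by
  simp only [vv]
  rw [show 1 - (2*Real.sqrt 2/3)^2 = ((1:ℝ)/3)^2 by linear_combination (-4/9)*h2,
      Real.sqrt_sq (by norm_num)]

lemma Ft1_neg (hr0 : 0 < r) (hr1 : r < Real.sqrt 6/4) :
    Hval (cfg (uu r (Real.sqrt 3/3)) (vv r (Real.sqrt 3/3))) < 0 := by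
  have htt : (Real.sqrt 3/3 : ℝ) ≤ Real.sqrt 3/3 := le_refl _
  have hu := uu_pos hr0 hr1 htt t1_le_t2
  have h45 := n45_pos hr0 hr1 htt t1_le_t2
  have h16 := n16_pos hr0 hr1 htt t1_le_t2
  rw [vv_t1 hr0] at h45 h16 ⊢
  rw [Hval_cfg]
  have hA0 : Aq (uu r (Real.sqrt 3/3)) (r*(Real.sqrt 6/3)) = 0 := by
    simp only [Aq, uu]; ring
  rw [hA0, mul_zero, abs_zero, mul_zero, zero_sub, neg_lt_zero]
  have hd : n16 (uu r (Real.sqrt 3/3)) (r*(Real.sqrt 6/3))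
      - n45 (uu r (Real.sqrt 3/3)) (r*(Real.sqrt 6/3)) = r := by
    rw [key1]; simp only [uu]; linear_combination ((1-r)/9)*h3 + (2*r/9)*h6
  have hS45pos : 0 < Real.sqrt (n45 (uu r (Real.sqrt 3/3)) (r*(Real.sqrt 6/3))) :=
    Real.sqrt_pos.2 h45
  have hS : Real.sqrt (n45 (uu r (Real.sqrt 3/3)) (r*(Real.sqrt 6/3)))
      < Real.sqrt (n16 (uu r (Real.sqrt 3/3)) (r*(Real.sqrt 6/3))) :=
    Real.sqrt_lt_sqrt h45.le (by linarith)
  have hRR : (Real.sqrt (n16 (uu r (Real.sqrt 3/3)) (r*(Real.sqrt 6/3))) ^ 3)⁻¹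
      < (Real.sqrt (n45 (uu r (Real.sqrt 3/3)) (r*(Real.sqrt 6/3))) ^ 3)⁻¹ :=
    inv_strictAnti₀ (by positivity) (pow_lt_pow_left₀ hS hS45pos.le (by norm_num))
  have hB : 0 < Bq (uu r (Real.sqrt 3/3)) (r*(Real.sqrt 6/3)) := by
    have := r_lt_one hr1
    simp only [Bq, uu]
    nlinarith [mul_pos s3pos s6pos]
  have habs : |-(Real.sqrt 3*(uu r (Real.sqrt 3/3))) * Bq (uu r (Real.sqrt 3/3)) (r*(Real.sqrt 6/3))|
      = Real.sqrt 3*(uu r (Real.sqrt 3/3)) * Bq (uu r (Real.sqrt 3/3)) (r*(Real.sqrt 6/3)) := by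
    rw [show -(Real.sqrt 3*(uu r (Real.sqrt 3/3))) * Bq (uu r (Real.sqrt 3/3)) (r*(Real.sqrt 6/3))
        = -((Real.sqrt 3*(uu r (Real.sqrt 3/3))) * Bq (uu r (Real.sqrt 3/3)) (r*(Real.sqrt 6/3))) by ring,
      abs_neg, abs_of_pos (mul_pos (mul_pos s3pos hu) hB)]
  rw [habs]
  exact mul_pos (by linarith) (mul_pos (mul_pos s3pos hu) hB)

lemma Ft2_pos (hr0 : 0 < r) (hr1 : r < Real.sqrt 6/4) :
    0 < Hval (cfg (uu r (2*Real.sqrt 2/3)) (vv r (2*Real.sqrt 2/3))) := by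
  have htt : (2*Real.sqrt 2/3 : ℝ) ≤ 2*Real.sqrt 2/3 := le_refl _
  have hu := uu_pos hr0 hr1 t1_le_t2 htt
  have h45 := n45_pos hr0 hr1 t1_le_t2 htt
  have h15 := n15_eq (r := r) t1_le_t2 htt
  rw [vv_t2 hr0] at h45 h15 ⊢
  rw [Hval_cfg]
  have hnn : n45 (uu r (2*Real.sqrt 2/3)) (r*(1/3)) = n16 (uu r (2*Real.sqrt 2/3)) (r*(1/3)) := by
    have := key1 (uu r (2*Real.sqrt 2/3)) (r*(1/3))
    have h0 : Real.sqrt 3/3*(uu r (2*Real.sqrt 2/3)) + 2*Real.sqrt 6/3*(r*(1/3)) - 1/3 = 0 := by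
      simp only [uu]; linear_combination (1/9)*h3 - (2*r/9)*h23
    linarith
  rw [hnn, sub_self, zero_mul, sub_zero, h15, Real.sqrt_sq hr0.le]
  have hA : Aq (uu r (2*Real.sqrt 2/3)) (r*(1/3)) = Real.sqrt 3 * r/3 := by
    simp only [Aq, uu]; linear_combination (2*r/9)*h26
  have hApos : 0 < Aq (uu r (2*Real.sqrt 2/3)) (r*(1/3)) := by
    rw [hA]; positivity
  have hd : n45 (uu r (2*Real.sqrt 2/3)) (r*(1/3)) - r^2 = 1 - 2*Real.sqrt 6/3*r := by
    rw [show (r:ℝ)^2 = n15 (uu r (2*Real.sqrt 2/3)) (r*(1/3)) from h15.symm, key2]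
    simp only [uu]; linear_combination (2/9)*h3 + (-4*r/9)*h23
  have hdpos : 0 < n45 (uu r (2*Real.sqrt 2/3)) (r*(1/3)) - r^2 := by
    rw [hd]; nlinarith [h6, s6pos]
  have hS : r < Real.sqrt (n45 (uu r (2*Real.sqrt 2/3)) (r*(1/3))) := by
    have := Real.sqrt_lt_sqrt (sq_nonneg r) (by linarith : r^2 < n45 (uu r (2*Real.sqrt 2/3)) (r*(1/3)))
    rwa [Real.sqrt_sq hr0.le] at this
  rw [hnn] at hS
  have hRR : (Real.sqrt (n16 (uu r (2*Real.sqrt 2/3)) (r*(1/3))) ^ 3)⁻¹ < (r ^ 3)⁻¹ :=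
    inv_strictAnti₀ (by positivity) (pow_lt_pow_left₀ hS hr0.le (by norm_num))
  have habs : |Real.sqrt 3*(uu r (2*Real.sqrt 2/3))/2 * Aq (uu r (2*Real.sqrt 2/3)) (r*(1/3))|
      = Real.sqrt 3*(uu r (2*Real.sqrt 2/3))/2 * Aq (uu r (2*Real.sqrt 2/3)) (r*(1/3)) :=
    abs_of_pos (mul_pos (by positivity) hApos)
  rw [habs]
  exact mul_pos (by linarith) (mul_pos (by positivity) hApos)

lemma contF (hr0 : 0 < r) (hr1 : r < Real.sqrt 6/4) :
    ContinuousOn (fun t => Hval (cfg (uu r t) (vv r t)))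
      (Set.Icc (Real.sqrt 3/3) (2*Real.sqrt 2/3)) := by
  have hu : Continuous (uu r) := by
    show Continuous fun t => Real.sqrt 3/3 - r*t; fun_prop
  have hv : Continuous (vv r) := by
    show Continuous fun t => r * Real.sqrt (1 - t^2)
    exact continuous_const.mul (Real.continuous_sqrt.comp (by fun_prop))
  have h15 : Continuous fun t => n15 (uu r t) (vv r t) := by
    simp only [n15]
    exact ((continuous_const.sub hu).pow 2).add (hv.pow 2)
  have h45 : Continuous fun t => n45 (uu r t) (vv r t) := by
    simp only [n45]
    exact (hu.pow 2).add ((hv.sub continuous_const).pow 2)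
  have h16 : Continuous fun t => n16 (uu r t) (vv r t) := by
    simp only [n16]
    exact (((continuous_const.add (hu.div_const 2)).pow 2).add
      (((continuous_const.mul hu).div_const 2).pow 2)).add (hv.pow 2)
  have cA : Continuous fun t => Real.sqrt 3*(uu r t)/2 * Aq (uu r t) (vv r t) := by
    simp only [Aq]
    exact ((continuous_const.mul hu).div_const 2).mul
      ((continuous_const.mul (continuous_const.sub hv)).sub (continuous_const.mul hu))
  have cB : Continuous fun t => -(Real.sqrt 3*(uu r t)) * Bq (uu r t) (vv r t) := by
    simp only [Bq]
    exact ((continuous_const.mul hu).neg).mul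
      ((continuous_const.mul (continuous_const.sub hv)).add
        ((continuous_const.mul hu).div_const 2))
  have c15 : ContinuousOn (fun t => (Real.sqrt (n15 (uu r t) (vv r t)) ^ 3)⁻¹)
      (Set.Icc (Real.sqrt 3/3) (2*Real.sqrt 2/3)) := by
    refine ContinuousOn.inv₀ (((Real.continuous_sqrt.comp h15).pow 3).continuousOn) ?_
    intro t ht
    exact pow_ne_zero _ (Real.sqrt_pos.2 (by rw [n15_eq (r := r) ht.1 ht.2]; positivity)).ne'
  have c45 : ContinuousOn (fun t => (Real.sqrt (n45 (uu r t) (vv r t)) ^ 3)⁻¹)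
      (Set.Icc (Real.sqrt 3/3) (2*Real.sqrt 2/3)) := by
    refine ContinuousOn.inv₀ (((Real.continuous_sqrt.comp h45).pow 3).continuousOn) ?_
    intro t ht
    exact pow_ne_zero _ (Real.sqrt_pos.2 (n45_pos hr0 hr1 ht.1 ht.2)).ne'
  have c16 : ContinuousOn (fun t => (Real.sqrt (n16 (uu r t) (vv r t)) ^ 3)⁻¹)
      (Set.Icc (Real.sqrt 3/3) (2*Real.sqrt 2/3)) := by
    refine ContinuousOn.inv₀ (((Real.continuous_sqrt.comp h16).pow 3).continuousOn) ?_
    intro t ht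
    exact pow_ne_zero _ (Real.sqrt_pos.2 (n16_pos hr0 hr1 ht.1 ht.2)).ne'
  have big : ContinuousOn (fun t =>
      ((Real.sqrt (n15 (uu r t) (vv r t)) ^ 3)⁻¹ - (Real.sqrt (n45 (uu r t) (vv r t)) ^ 3)⁻¹)
        * |Real.sqrt 3*(uu r t)/2 * Aq (uu r t) (vv r t)|
      - ((Real.sqrt (n45 (uu r t) (vv r t)) ^ 3)⁻¹ - (Real.sqrt (n16 (uu r t) (vv r t)) ^ 3)⁻¹)
        * |-(Real.sqrt 3*(uu r t)) * Bq (uu r t) (vv r t)|)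
      (Set.Icc (Real.sqrt 3/3) (2*Real.sqrt 2/3)) :=
    ((c15.sub c45).mul cA.abs.continuousOn).sub ((c45.sub c16).mul cB.abs.continuousOn)
  exact ContinuousOn.congr big (fun t _ => Hval_cfg (uu r t) (vv r t))

end endpoints


set_option maxHeartbeats 2000000 in
/-- For every `r₁₅ ∈ (0, √6/4)` there exist `r₁₆`, `r₄₅` with
`1 > r₁₆ > r₄₅ > r₁₅` and a symmetric configuration realizing these distance parameters which
lies in `Ω_H`, i.e. with `Δ₁₄₅₇ ≤ 0` and `H = 0`. -/
theorem statement16 (r15 : ℝ) (hr0 : 0 < r15) (hr1 : r15 < Real.sqrt 6 / 4) :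
    ∃ r16 r45 : ℝ, r16 < 1 ∧ r45 < r16 ∧ r15 < r45 ∧
      ∃ q : Fin 7 → E3, IsSymmetricConfig q ∧
        dist (q 0) (q 4) = r15 ∧ dist (q 0) (q 5) = r16 ∧ dist (q 3) (q 4) = r45 ∧
        Delta q 0 3 4 6 ≤ 0 ∧ Hval q = 0 := by
  have hr1' : r15 < Real.sqrt 6/4 := by linarith
  -- IVT
  obtain ⟨c, hcmem, hFc⟩ :
      ∃ c ∈ Set.Icc (Real.sqrt 3/3) (2*Real.sqrt 2/3),
        (fun t => Hval (cfg (uu r15 t) (vv r15 t))) c = 0 := by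
    have h0 : (0:ℝ) ∈ Set.Icc
        (Hval (cfg (uu r15 (Real.sqrt 3/3)) (vv r15 (Real.sqrt 3/3))))
        (Hval (cfg (uu r15 (2*Real.sqrt 2/3)) (vv r15 (2*Real.sqrt 2/3)))) :=
      ⟨(Ft1_neg hr0 hr1').le, (Ft2_pos hr0 hr1').le⟩
    obtain ⟨c, hc, hc0⟩ := intermediate_value_Icc t1_le_t2 (contF hr0 hr1') h0
    exact ⟨c, hc, hc0⟩
  obtain ⟨hc1, hc2⟩ := hcmem
  simp only at hFc
  -- c is strictly inside
  have hcne1 : c ≠ Real.sqrt 3/3 := by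
    intro h; rw [h] at hFc; exact absurd hFc (ne_of_lt (Ft1_neg hr0 hr1'))
  have hcne2 : c ≠ 2*Real.sqrt 2/3 := by
    intro h; rw [h] at hFc; exact absurd hFc (ne_of_gt (Ft2_pos hr0 hr1'))
  have hc1' : Real.sqrt 3/3 < c := lt_of_le_of_ne hc1 (Ne.symm hcne1)
  have hc2' : c < 2*Real.sqrt 2/3 := lt_of_le_of_ne hc2 hcne2
  have hcpos : 0 < c := lt_of_lt_of_le (by positivity) hc1
  -- notation
  set U := uu r15 c with hUdef
  set V := vv r15 c with hVdef
  have hU : 0 < U := uu_pos hr0 hr1' hc1 hc2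
  have hV2 : V^2 = r15^2*(1 - c^2) := vv_sq hc1 hc2
  have hVnn : 0 ≤ V := vv_nonneg hr0
  have hVle : V ≤ r15 := vv_le hr0 hc1 hc2
  have hVpos : 0 < V := by
    rw [hVdef]; simp only [vv]
    have hcsq : c^2 < 1 := by have := csq_lt hcpos hc2'; linarith
    exact mul_pos hr0 (Real.sqrt_pos.2 (by linarith))
  have hn15 : n15 U V = r15^2 := n15_eq hc1 hc2
  have hn45pos : 0 < n45 U V := n45_pos hr0 hr1' hc1 hc2
  have hn16pos : 0 < n16 U V := n16_pos hr0 hr1' hc1 hc2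
  have hUeq : U = Real.sqrt 3/3 - r15*c := rfl
  -- A > 0
  have hAeq : Aq U V = Real.sqrt 6/3*(r15*c) - Real.sqrt 3/3*V := by
    simp only [Aq, hUeq]; ring
  have hcsq13 : 1/3 < c^2 := csq_gt hc1'
  have hXY : (Real.sqrt 6/3*(r15*c))^2 - (Real.sqrt 3/3*V)^2 = r15^2*(9*c^2-3)/9 := by
    linear_combination (r15^2*c^2/9)*h6 - (V^2/9)*h3 - (1/3)*hV2
  have hApos : 0 < Aq U V := by
    rw [hAeq]
    have hX : 0 < Real.sqrt 6/3*(r15*c) :=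
      mul_pos (by positivity) (mul_pos hr0 hcpos)
    have hY : 0 ≤ Real.sqrt 3/3*V := mul_nonneg (by positivity) hVnn
    have h9 : 0 < r15^2*(9*c^2-3)/9 :=
      div_pos (mul_pos (pow_pos hr0 2) (by linarith)) (by norm_num)
    have := sq_diff_pos hX hY (by linarith)
    linarith
  -- B > 0
  have hBpos : 0 < Bq U V := by
    have : Bq U V = Aq U V + Real.sqrt 6*U/2 := by simp only [Bq, Aq]; ring
    rw [this]
    have h2' : 0 < Real.sqrt 6*U/2 := div_pos (mul_pos s6pos hU) (by norm_num)
    linarith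
  -- n45 < n16
  have hn1645eq : n16 U V - n45 U V = 2*Real.sqrt 6/3*V - Real.sqrt 3/3*(r15*c) := by
    rw [key1]; simp only [hUeq]; linear_combination (1/9)*h3
  have hcsq89 : c^2 < 8/9 := csq_lt hcpos hc2'
  have hXY2 : (2*Real.sqrt 6/3*V)^2 - (Real.sqrt 3/3*(r15*c))^2 = r15^2*(24 - 27*c^2)/9 := by
    linear_combination (4*V^2/9)*h6 - (r15^2*c^2/9)*h3 + (8/3)*hV2
  have hn1645 : n45 U V < n16 U V := by
    have hX : 0 < 2*Real.sqrt 6/3*V := mul_pos (by positivity) hVpos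
    have hY : 0 ≤ Real.sqrt 3/3*(r15*c) :=
      mul_nonneg (by positivity) (mul_pos hr0 hcpos).le
    have h9 : 0 < r15^2*(24 - 27*c^2)/9 :=
      div_pos (mul_pos (pow_pos hr0 2) (by linarith)) (by norm_num)
    have := sq_diff_pos hX hY (by linarith)
    linarith
  -- square roots
  have hS45pos : 0 < Real.sqrt (n45 U V) := Real.sqrt_pos.2 hn45pos
  have hS4516 : Real.sqrt (n45 U V) < Real.sqrt (n16 U V) := Real.sqrt_lt_sqrt hn45pos.le hn1645
  -- Hval = 0 rearranged
  have hHeq := Hval_cfg U V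
  rw [hFc] at hHeq
  have habsA : |Real.sqrt 3*U/2 * Aq U V| = Real.sqrt 3*U/2 * Aq U V :=
    abs_of_pos (mul_pos (by positivity) hApos)
  have habsB : |-(Real.sqrt 3*U) * Bq U V| = Real.sqrt 3*U * Bq U V := by
    rw [show -(Real.sqrt 3*U) * Bq U V = -((Real.sqrt 3*U) * Bq U V) by ring,
      abs_neg, abs_of_pos (mul_pos (mul_pos s3pos hU) hBpos)]
  have hsq15 : Real.sqrt (n15 U V) = r15 := by rw [hn15]; exact Real.sqrt_sq hr0.le
  rw [habsA, habsB, hsq15] at hHeq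
  have hRR : (Real.sqrt (n16 U V) ^ 3)⁻¹ < (Real.sqrt (n45 U V) ^ 3)⁻¹ :=
    inv_strictAnti₀ (pow_pos hS45pos 3) (pow_lt_pow_left₀ hS4516 hS45pos.le (by norm_num))
  have hP1 : 0 < Real.sqrt 3*U/2 * Aq U V :=
    mul_pos (div_pos (mul_pos s3pos hU) (by norm_num)) hApos
  have hP2 : 0 < Real.sqrt 3*U * Bq U V := mul_pos (mul_pos s3pos hU) hBpos
  have hprod2 : 0 < ((Real.sqrt (n45 U V) ^ 3)⁻¹ - (Real.sqrt (n16 U V) ^ 3)⁻¹)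
      * (Real.sqrt 3*U * Bq U V) := mul_pos (by linarith) hP2
  have hprod1 : 0 < ((r15 ^ 3)⁻¹ - (Real.sqrt (n45 U V) ^ 3)⁻¹)
      * (Real.sqrt 3*U/2 * Aq U V) := by linarith
  have h1pos : 0 < (r15 ^ 3)⁻¹ - (Real.sqrt (n45 U V) ^ 3)⁻¹ := by
    rcases mul_pos_iff.mp hprod1 with ⟨h, _⟩ | ⟨_, h⟩
    · exact h
    · linarith
  have hcube : r15^3 < Real.sqrt (n45 U V) ^ 3 := by
    by_contra hle
    push_neg at hle
    have := inv_anti₀ (pow_pos hS45pos 3) hle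
    linarith
  have hrS45 : r15 < Real.sqrt (n45 U V) := by
    by_contra hle
    push_neg at hle
    have := pow_le_pow_left₀ hS45pos.le hle 3
    linarith
  -- r16 < 1
  have hUle : U ≤ Real.sqrt 3/3 - r15*(Real.sqrt 3/3) := by
    rw [hUeq]
    have := mul_le_mul_of_nonneg_left hc1 hr0.le
    linarith
  have hr34 : r15 < 3/4 := r_lt_34 hr1'
  have hn16lt1 : n16 U V < 1 := by
    rw [key3]
    exact n16_lt_one hr0 hr34 hU.le hUle hVnn hVle
  have hS16lt1 : Real.sqrt (n16 U V) < 1 := by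
    have := Real.sqrt_lt_sqrt hn16pos.le hn16lt1
    rwa [Real.sqrt_one] at this
  -- distances
  have d04 : dist (cfg U V 0) (cfg U V 4) = r15 := by
    rw [cfg_0, cfg_4, dist_e3,
      show (Real.sqrt 3/3 - U)^2 + ((0:ℝ)-0)^2 + (0-V)^2 = r15^2 by
        rw [← hn15]; simp only [n15]; ring]
    exact Real.sqrt_sq hr0.le
  have d34 : dist (cfg U V 3) (cfg U V 4) = Real.sqrt (n45 U V) := by
    rw [cfg_3, cfg_4, dist_e3]; congr 1; simp only [n45]; ring
  have d05 : dist (cfg U V 0) (cfg U V 5) = Real.sqrt (n16 U V) := by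
    rw [cfg_0, cfg_5, dist_e3]; congr 1; simp only [n16]; ring
  refine ⟨Real.sqrt (n16 U V), Real.sqrt (n45 U V), hS16lt1, hS4516, hrS45,
    cfg U V, symm_cfg U V, d04, d05, d34, ?_, hFc⟩
  rw [delta0346]
  linarith [hP1]
end
end

section
/- Let q₁,…,q₇ in ℝ³ be a symmetric configuration with r₁₅ ∈ (0, √6/4) and 1 > r₁₆ > r₄₅ > r₁₅, and set H = (R₁₅ − R₄₅)D₁₄₅₆ − (R₄₅ − R₁₆)D₁₄₆₇. (a) If D₁₄₅₆ = 0 (equivalently Δ₁₄₅₇ = 0) and D₁₄₆₇ > 0, then H < 0. (b) If instead the configuration satisfies r₁₅ < r₄₅ = r₁₆ < 1 and D₁₄₅₆ > 0, then H > 0. -/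
noncomputable section

open Finset

lemma Rinv_lt_Rinv {n : ℕ} (q : Fin n → E3) (i j k l : Fin n)
    (h0 : 0 < dist (q i) (q j)) (h : dist (q i) (q j) < dist (q k) (q l)) :
    Rinv q k l < Rinv q i j := by
  unfold Rinv
  rw [← dist_eq_norm, ← dist_eq_norm]
  have h3 : dist (q i) (q j) ^ 3 < dist (q k) (q l) ^ 3 :=
    pow_lt_pow_left₀ h h0.le (by norm_num)
  exact inv_strictAnti₀ (pow_pos h0 3) h3

/-- For a symmetric configuration with `r₁₅ ∈ (0, √6/4)`:
(a) if `1 > r₁₆ > r₄₅ > r₁₅`, `D₁₄₅₆ = 0` and `D₁₄₆₇ > 0`, then `H < 0`;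
(b) if instead `r₁₅ < r₄₅ = r₁₆ < 1` and `D₁₄₅₆ > 0`, then `H > 0`. -/
theorem statement19 (q : Fin 7 → E3) (hsym : IsSymmetricConfig q)
    (hr0 : 0 < dist (q 0) (q 4)) (hr1 : dist (q 0) (q 4) < Real.sqrt 6 / 4) :
    ((dist (q 0) (q 5) < 1 → dist (q 3) (q 4) < dist (q 0) (q 5) →
      dist (q 0) (q 4) < dist (q 3) (q 4) →
      Dvol q 0 3 4 5 = 0 → 0 < Dvol q 0 3 5 6 → Hval q < 0)) ∧
    ((dist (q 0) (q 4) < dist (q 3) (q 4) → dist (q 3) (q 4) = dist (q 0) (q 5) →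
      dist (q 0) (q 5) < 1 →
      0 < Dvol q 0 3 4 5 → 0 < Hval q)) := by
  constructor
  · intro _ h45lt16 h15lt45 hD0 hD1
    have h1 : Rinv q 0 5 < Rinv q 3 4 :=
      Rinv_lt_Rinv q 3 4 0 5 (hr0.trans h15lt45) h45lt16
    have : Hval q = -((Rinv q 3 4 - Rinv q 0 5) * Dvol q 0 3 5 6) := by
      unfold Hval; rw [hD0]; ring
    rw [this]
    have := mul_pos (sub_pos.mpr h1) hD1
    linarith
  · intro h15lt45 h45eq16 _ hD0
    have h1 : Rinv q 3 4 < Rinv q 0 4 :=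
      Rinv_lt_Rinv q 0 4 3 4 hr0 h15lt45
    have h2 : Rinv q 3 4 = Rinv q 0 5 := by
      unfold Rinv; rw [← dist_eq_norm, ← dist_eq_norm, h45eq16]
    have : Hval q = (Rinv q 0 4 - Rinv q 3 4) * Dvol q 0 3 4 5 := by
      unfold Hval; rw [h2]; ring
    rw [this]
    exact mul_pos (sub_pos.mpr h1) hD0
end
end
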